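/- For any numerical semigroup H, twice the genus of H is at least the Frobenius number of H plus the type of H, i.e., 2g(H) ≥ F(H) + t(H). -/

import Mathlib

/-- A numerical semigroup, viewed as a set of integers: a set of nonnegative
integers containing 0, closed under addition, with finite complement in ℕ. -/
def IsNumericalSemigroup (S : Set ℤ) : Prop :=
  (∀ x ∈ S, 0 ≤ x) ∧ 0 ∈ S ∧ (∀ a ∈ S, ∀ b ∈ S, a + b ∈ S) ∧
    {z : ℤ | 0 ≤ z ∧ z ∉ S}.Finite

/-- The genus: the number of nonnegative integers not in `S`. -/
noncomputable def genus (S : Set ℤ) : ℕ := {z : ℤ | 0 ≤ z ∧ z ∉ S}.ncard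

/-- The Frobenius number: the largest integer not in `S`. -/
noncomputable def frob (S : Set ℤ) : ℤ := sSup {z : ℤ | z ∉ S}

/-- The set of pseudo-Frobenius numbers. -/
def PF (S : Set ℤ) : Set ℤ := {x : ℤ | x ∉ S ∧ ∀ h ∈ S, h ≠ 0 → x + h ∈ S}

/-- The type: the number of pseudo-Frobenius numbers. -/
noncomputable def typ (S : Set ℤ) : ℕ := (PF S).ncard

/-- The multiplicity: the smallest nonzero element of `S`. -/
noncomputable def mult (S : Set ℤ) : ℤ := sInf {z : ℤ | z ∈ S ∧ z ≠ 0}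

/-- The Apéry set of `S` with respect to `n`. -/
def apery (S : Set ℤ) (n : ℤ) : Set ℤ := {s ∈ S | s - n ∉ S}

/-- The dual `H* = M - M` of the maximal ideal `M = S \ {0}`. -/
def dual (S : Set ℤ) : Set ℤ :=
  {z : ℤ | ∀ m ∈ S, m ≠ 0 → z + m ∈ S ∧ z + m ≠ 0}

/-- Almost symmetric: `2 g(S) = F(S) + t(S)`. -/
def AlmostSymmetric (S : Set ℤ) : Prop := 2 * (genus S : ℤ) = frob S + (typ S : ℤ)

/-- Symmetric: `2 g(S) = F(S) + 1`. -/
def SymmetricNS (S : Set ℤ) : Prop := 2 * (genus S : ℤ) = frob S + 1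

/-- Pseudo-symmetric: `2 g(S) = F(S) + 2`. -/
def PseudoSymmetric (S : Set ℤ) : Prop := 2 * (genus S : ℤ) = frob S + 2

/-- The set of minimal generators of `S`: nonzero elements not expressible as the
sum of two nonzero elements of `S`. -/
def minGens (S : Set ℤ) : Set ℤ :=
  {x ∈ S | x ≠ 0 ∧ ∀ a ∈ S, ∀ b ∈ S, a ≠ 0 → b ≠ 0 → x ≠ a + b}

/-- The embedding dimension: the number of minimal generators. -/
noncomputable def embdim (S : Set ℤ) : ℕ := (minGens S).ncard

/-- The gluing `⟨x S₁, y S₂⟩` of two numerical semigroups. -/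
def glue (x y : ℤ) (S₁ S₂ : Set ℤ) : Set ℤ :=
  {z : ℤ | ∃ a ∈ S₁, ∃ b ∈ S₂, z = x * a + y * b}

theorem stmt0 (S : Set ℤ) (hS : IsNumericalSemigroup S) :
    frob S + (typ S : ℤ) ≤ 2 * (genus S : ℤ) := by
  obtain ⟨hpos, h0, hadd, hfin⟩ := hS
  -- bounded above
  obtain ⟨N, hN⟩ := hfin.bddAbove
  have hbdd : BddAbove {z : ℤ | z ∉ S} := by
    refine ⟨max N 0, fun z hz => ?_⟩
    rcases le_or_gt 0 z with h | h
    · exact le_trans (hN ⟨h, hz⟩) (le_max_left _ _)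
    · exact le_trans h.le (le_max_right _ _)
  have hne : {z : ℤ | z ∉ S}.Nonempty := ⟨-1, fun h => by simpa using hpos _ h⟩
  have hFmem : frob S ∉ S := Int.csSup_mem hne hbdd
  have hFmax : ∀ z, z ∉ S → z ≤ frob S := fun z hz => le_csSup hbdd hz
  set F := frob S with hFdef
  -- case F = -1 (i.e. F < 0)
  rcases lt_or_ge F 0 with hFneg | hF0
  · have hFeq : F = -1 := le_antisymm (by omega) (hFmax _ (fun h => by simpa using hpos _ h))
    have hgap : {z : ℤ | 0 ≤ z ∧ z ∉ S} = ∅ := by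
      ext z; simp only [Set.mem_setOf_eq, Set.mem_empty_iff_false, iff_false]
      rintro ⟨hz, hzS⟩; have := hFmax z hzS; omega
    have hg : genus S = 0 := by rw [genus, hgap, Set.ncard_empty]
    have hPF : PF S ⊆ {-1} := by
      rintro x ⟨hx, hx2⟩
      have hxle := hFmax x hx
      have h1 : (1:ℤ) ∈ S := by
        by_contra h; have := hFmax 1 h; omega
      simp only [Set.mem_singleton_iff]
      by_contra hne1
      have : x + 1 ∈ S := hx2 1 h1 one_ne_zero
      have := hpos _ this
      omega
    have ht : typ S ≤ 1 := by
      calc typ S ≤ ({-1} : Set ℤ).ncard := Set.ncard_le_ncard hPF (Set.finite_singleton _)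
        _ = 1 := Set.ncard_singleton _
    rw [hg]; push_cast; omega
  -- main case F ≥ 0
  · set T := {z : ℤ | 0 ≤ z ∧ z ∉ S} with hT
    set B := {z : ℤ | 0 ≤ z ∧ z ∉ S ∧ F - z ∉ S} with hB
    set C := {z : ℤ | 0 ≤ z ∧ z ∉ S ∧ F - z ∈ S} with hC
    set SI := {z : ℤ | 0 ≤ z ∧ z ≤ F ∧ z ∈ S} with hSI
    have hBsub : B ⊆ T := fun z hz => ⟨hz.1, hz.2.1⟩
    have hCsub : C ⊆ T := fun z hz => ⟨hz.1, hz.2.1⟩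
    have hBfin : B.Finite := hfin.subset hBsub
    have hCfin : C.Finite := hfin.subset hCsub
    have hSIfin : SI.Finite := (Set.finite_Icc 0 F).subset (fun z hz => ⟨hz.1, hz.2.1⟩)
    -- T = B ∪ C, disjoint
    have hTBC : T = B ∪ C := by
      ext z
      simp only [hT, hB, hC, Set.mem_setOf_eq, Set.mem_union]
      constructor
      · rintro ⟨h1, h2⟩; by_cases h : F - z ∈ S
        · exact Or.inr ⟨h1, h2, h⟩
        · exact Or.inl ⟨h1, h2, h⟩
      · rintro (⟨h1, h2, _⟩ | ⟨h1, h2, _⟩) <;> exact ⟨h1, h2⟩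
    have hdisj : Disjoint B C := by
      rw [Set.disjoint_left]; rintro z ⟨_, _, h3⟩ ⟨_, _, h4⟩; exact h3 h4
    have hgsum : genus S = B.ncard + C.ncard := by
      rw [genus, ← hT, hTBC, Set.ncard_union_eq hdisj hBfin hCfin]
    -- C maps bijectively to SI
    have himg : (fun z => F - z) '' C = SI := by
      ext w
      simp only [Set.mem_image, hC, hSI, Set.mem_setOf_eq]
      constructor
      · rintro ⟨z, ⟨h1, h2, h3⟩, rfl⟩
        exact ⟨hpos _ h3, by omega, h3⟩
      · rintro ⟨h1, h2, h3⟩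
        refine ⟨F - w, ⟨by omega, ?_, by simpa using h3⟩, by ring⟩
        intro h
        have : (F - w) + w ∈ S := hadd _ h _ h3
        simp only [sub_add_cancel] at this
        exact hFmem this
    have hCSI : C.ncard = SI.ncard := by
      rw [← himg, Set.ncard_image_of_injOn]
      intro a _ b _ h; dsimp only at h; omega
    -- SI ∪ T = Icc 0 F, disjoint
    have hTle : ∀ z ∈ T, z ≤ F := fun z hz => hFmax z hz.2
    have hIcc : Set.Icc (0:ℤ) F = SI ∪ T := by
      ext z
      simp only [Set.mem_Icc, Set.mem_union, hSI, hT, Set.mem_setOf_eq]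
      constructor
      · rintro ⟨h1, h2⟩; by_cases h : z ∈ S
        · exact Or.inl ⟨h1, h2, h⟩
        · exact Or.inr ⟨h1, h⟩
      · rintro (⟨h1, h2, _⟩ | h)
        · exact ⟨h1, h2⟩
        · exact ⟨h.1, hTle z h⟩
    have hdisj2 : Disjoint SI T := by
      rw [Set.disjoint_left]; rintro z ⟨_, _, h3⟩ ⟨_, h4⟩; exact h4 h3
    have hIccCard : (Set.Icc (0:ℤ) F).ncard = SI.ncard + genus S := by
      rw [hIcc, Set.ncard_union_eq hdisj2 hSIfin hfin]; rfl
    have hIccVal : ((Set.Icc (0:ℤ) F).ncard : ℤ) = F + 1 := by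
      rw [show Set.Icc (0:ℤ) F = ↑(Finset.Icc (0:ℤ) F) by simp]
      rw [Set.ncard_coe_finset, Int.card_Icc]
      omega
    -- PF injects into B ∪ {F}
    have hPFsub : PF S ⊆ T := by
      rintro x ⟨hx1, hx2⟩
      refine ⟨?_, hx1⟩
      by_contra hx0
      push_neg at hx0
      have hFx : F - x ∈ S := by
        by_contra h
        have := hFmax _ h; omega
      have hFx0 : F - x ≠ 0 := by omega
      have := hx2 _ hFx hFx0
      simp only [add_sub_cancel] at this
      exact hFmem this
    have hPFfin : (PF S).Finite := hfin.subset hPFsub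
    have hmap : (fun z => F - z) '' (PF S \ {F}) ⊆ B := by
      rintro w ⟨x, ⟨⟨hx1, hx2⟩, hxF⟩, rfl⟩
      dsimp only
      simp only [Set.mem_singleton_iff] at hxF
      have hxT := hPFsub ⟨hx1, hx2⟩
      have hxle : x ≤ F := hFmax x hx1
      refine ⟨by omega, ?_, by simpa using hx1⟩
      intro h
      have hFx0 : F - x ≠ 0 := by omega
      have := hx2 _ h hFx0
      simp only [add_sub_cancel] at this
      exact hFmem this
    have ht1 : (PF S \ {F}).ncard ≤ B.ncard := by
      calc (PF S \ {F}).ncard = ((fun z => F - z) '' (PF S \ {F})).ncard := by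
            rw [Set.ncard_image_of_injOn]; intro a _ b _ h; dsimp only at h; omega
        _ ≤ B.ncard := Set.ncard_le_ncard hmap hBfin
    have ht2 : typ S ≤ (PF S \ {F}).ncard + 1 := by
      have : PF S ⊆ (PF S \ {F}) ∪ {F} := by
        intro x hx
        by_cases h : x = F
        · exact Or.inr (by simp [h])
        · exact Or.inl ⟨hx, h⟩
      calc typ S ≤ ((PF S \ {F}) ∪ {F}).ncard :=
            Set.ncard_le_ncard this ((hPFfin.diff (t := {F})).union (Set.finite_singleton _))
        _ ≤ (PF S \ {F}).ncard + ({F} : Set ℤ).ncard :=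
            Set.ncard_union_le _ _
        _ = (PF S \ {F}).ncard + 1 := by rw [Set.ncard_singleton]
    -- combine
    have h1 : (genus S : ℤ) = B.ncard + C.ncard := by exact_mod_cast hgsum
    have h2 : (SI.ncard : ℤ) + genus S = F + 1 := by
      rw [← hIccVal]; exact_mod_cast hIccCard.symm
    have h3 : (C.ncard : ℤ) = SI.ncard := by exact_mod_cast hCSI
    have h4 : (typ S : ℤ) ≤ (PF S \ {F}).ncard + 1 := by exact_mod_cast ht2
    have h5 : ((PF S \ {F}).ncard : ℤ) ≤ B.ncard := by exact_mod_cast ht1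
    linarith
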